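/- Let i ≥ 1 and m ≥ 1. If there is a normal derivation in natural deduction for M→ of the atom C whose open assumptions are exactly m occurrences of the formula ξ_i, then there is a normal derivation of C whose open assumptions are exactly 2m occurrences of the formula ξ_{i+1}. -/

import Mathlib

/-- Formulas of purely implicational logic, built from atoms (numbered by `ℕ`)
by the single connective `→` (`impl`). -/
inductive Fm : Type
  | atom : ℕ → Fm
  | impl : Fm → Fm → Fm
deriving DecidableEq

/-- χ[X,Y] = (((X → Y) → X) → X) → Y. -/
def chi (X Y : Fm) : Fm := (((X.impl Y).impl X).impl X).impl Y

/-- The atom `Fm.atom 0` is C, and `Fm.atom k` is D_k for k ≥ 1.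
ξ₁ = χ[D₁, C] and ξ_{i+1} = χ[D_{i+1}, ξ_i]  (the value at 0 is irrelevant). -/
def xi : ℕ → Fm
  | 0 => chi (.atom 1) (.atom 0)
  | 1 => chi (.atom 1) (.atom 0)
  | n + 2 => chi (.atom (n + 2)) (xi (n + 1))

/-- φ_n = ξ_n → C. -/
def phi (n : ℕ) : Fm := (xi n).impl (.atom 0)

/-- Natural deduction derivations for M→, indexed by the multiset of open
assumption occurrences and the conclusion.  `assume a` is a one-occurrence
assumption of `a`; `intro n` is →-introduction discharging exactly `n`
occurrences of the assumption `a`; `elim` is →-elimination whose second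
premise (the implication) is the major premise. -/
inductive Deriv : Multiset Fm → Fm → Type
  | assume (a : Fm) : Deriv {a} a
  | intro {Γ : Multiset Fm} {a b : Fm} (n : ℕ)
      (d : Deriv (Γ + Multiset.replicate n a) b) : Deriv Γ (a.impl b)
  | elim {Γ Δ : Multiset Fm} {a b : Fm}
      (minor : Deriv Γ a) (major : Deriv Δ (a.impl b)) : Deriv (Γ + Δ) b

/-- The last rule of the derivation is an →-introduction. -/
def Deriv.isIntro : ∀ {Γ b}, Deriv Γ b → Prop
  | _, _, .intro _ _ => True
  | _, _, _ => False

/-- A derivation is normal if no formula occurrence is both the conclusion of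
an →-introduction and the major premise of an →-elimination. -/
def Deriv.normal : ∀ {Γ b}, Deriv Γ b → Prop
  | _, _, .assume _ => True
  | _, _, .intro _ d => d.normal
  | _, _, .elim minor major => minor.normal ∧ major.normal ∧ ¬ major.isIntro

/-! ### Auxiliary machinery -/

/-- Cast a derivation along an equality of contexts. -/
def Deriv.dcast {Γ Γ' : Multiset Fm} {b : Fm} (h : Γ = Γ') (d : Deriv Γ b) : Deriv Γ' b :=
  h ▸ d

@[simp] lemma Deriv.dcast_normal {Γ Γ' : Multiset Fm} {b : Fm} (h : Γ = Γ') (d : Deriv Γ b) :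
    (d.dcast h).normal ↔ d.normal := by subst h; exact Iff.rfl

@[simp] lemma Deriv.dcast_isIntro {Γ Γ' : Multiset Fm} {b : Fm} (h : Γ = Γ') (d : Deriv Γ b) :
    (d.dcast h).isIntro ↔ d.isIntro := by subst h; exact Iff.rfl

/-- Split a decomposition of a sum of multisets. -/
lemma multiset_split (a : Fm) : ∀ (k : ℕ) (Γ₁ Γ₂ S : Multiset Fm),
    Γ₁ + Γ₂ = S + Multiset.replicate k a →
    ∃ S₁ S₂ k₁ k₂, k₁ + k₂ = k ∧ S₁ + S₂ = S ∧
      Γ₁ = S₁ + Multiset.replicate k₁ a ∧ Γ₂ = S₂ + Multiset.replicate k₂ a := by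
  intro k
  induction k with
  | zero =>
    intro Γ₁ Γ₂ S h
    exact ⟨Γ₁, Γ₂, 0, 0, rfl, by simpa using h, by simp, by simp⟩
  | succ k ih =>
    intro Γ₁ Γ₂ S h
    have ha : a ∈ Γ₁ + Γ₂ := by
      rw [h]; simp [Multiset.replicate_succ]
    rcases Multiset.mem_add.mp ha with h1 | h2
    · obtain ⟨Γ₁', rfl⟩ := Multiset.exists_cons_of_mem h1
      have h' : Γ₁' + Γ₂ = S + Multiset.replicate k a := by
        have : a ::ₘ (Γ₁' + Γ₂) = a ::ₘ (S + Multiset.replicate k a) := by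
          simpa [Multiset.replicate_succ, Multiset.cons_add, Multiset.add_cons] using h
        exact (Multiset.cons_inj_right a).mp this
      obtain ⟨S₁, S₂, k₁, k₂, hk, hS, e₁, e₂⟩ := ih Γ₁' Γ₂ S h'
      exact ⟨S₁, S₂, k₁ + 1, k₂, by omega, hS,
        by rw [e₁]; simp [Multiset.replicate_succ, Multiset.add_cons], e₂⟩
    · obtain ⟨Γ₂', rfl⟩ := Multiset.exists_cons_of_mem h2
      have h' : Γ₁ + Γ₂' = S + Multiset.replicate k a := by
        have : a ::ₘ (Γ₁ + Γ₂') = a ::ₘ (S + Multiset.replicate k a) := by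
          simpa [Multiset.replicate_succ, Multiset.cons_add, Multiset.add_cons] using h
        exact (Multiset.cons_inj_right a).mp this
      obtain ⟨S₁, S₂, k₁, k₂, hk, hS, e₁, e₂⟩ := ih Γ₁ Γ₂' S h'
      exact ⟨S₁, S₂, k₁, k₂ + 1, by omega, hS, e₁,
        by rw [e₂]; simp [Multiset.replicate_succ, Multiset.add_cons]⟩

/-- Substitution: replacing `k` open occurrences of `a` by a normal non-intro
derivation of `a` preserves normality. -/
lemma subst_lemma {a : Fm} {Δ : Multiset Fm} (e : Deriv Δ a)
    (he : e.normal) (hei : ¬ e.isIntro) :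
    ∀ {Γ b} (d : Deriv Γ b), d.normal →
      ∀ (S : Multiset Fm) (k : ℕ), Γ = S + Multiset.replicate k a →
      ∃ d' : Deriv (S + k • Δ) b, d'.normal ∧ (d'.isIntro → d.isIntro) := by
  intro Γ b d
  induction d with
  | assume c =>
    intro _ S k hS
    match k with
    | 0 =>
      have hS' : S = {c} := by simpa using hS.symm
      subst hS'
      refine ⟨(Deriv.assume c).dcast (by simp), ?_, ?_⟩
      · rw [Deriv.dcast_normal]; trivial
      · rw [Deriv.dcast_isIntro]; exact fun h => h
    | 1 =>
      have hcard : Multiset.card ({c} : Multiset Fm) =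
          Multiset.card (S + Multiset.replicate 1 a) := by rw [hS]
      simp at hcard
      subst hcard
      have hca : c = a := by
        have : ({c} : Multiset Fm) = {a} := by simpa using hS
        simpa using Multiset.singleton_inj.mp this
      subst hca
      refine ⟨e.dcast (by simp), ?_, ?_⟩
      · simpa using he
      · simpa using fun h => absurd h hei
    | (k + 2) =>
      exfalso
      have hcard : Multiset.card ({c} : Multiset Fm) =
          Multiset.card (S + Multiset.replicate (k + 2) a) := by rw [hS]
      simp at hcard
  | intro n d ih =>
    intro hnorm S k hS
    obtain ⟨d'', hn, -⟩ := ih hnorm (S + Multiset.replicate n _) k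
      (by rw [hS, add_right_comm])
    refine ⟨Deriv.intro n (d''.dcast (add_right_comm _ _ _)), ?_, fun _ => trivial⟩
    show (d''.dcast _).normal
    simpa using hn
  | elim minor major ih₁ ih₂ =>
    intro hnorm S k hS
    obtain ⟨hn₁, hn₂, hni⟩ := hnorm
    obtain ⟨S₁, S₂, k₁, k₂, hk, hSsum, h₁, h₂⟩ := multiset_split a k _ _ S hS
    obtain ⟨d₁, hd₁, -⟩ := ih₁ hn₁ S₁ k₁ h₁
    obtain ⟨d₂, hd₂, hi₂⟩ := ih₂ hn₂ S₂ k₂ h₂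
    have hctx : (S₁ + k₁ • Δ) + (S₂ + k₂ • Δ) = S + k • Δ := by
      rw [← hk, ← hSsum, add_nsmul]
      exact add_add_add_comm _ _ _ _
    refine ⟨(Deriv.elim d₁ d₂).dcast hctx, ?_, ?_⟩
    · rw [Deriv.dcast_normal]
      exact ⟨hd₁, hd₂, fun h => hni (hi₂ h)⟩
    · rw [Deriv.dcast_isIntro]
      exact fun h => h.elim

/-- A normal, non-intro derivation of `ξ_i` from two occurrences of `ξ_{i+1}`. -/
lemma two_copies (i : ℕ) (hi : 1 ≤ i) :
    ∃ e : Deriv (Multiset.replicate 2 (xi (i + 1))) (xi i), e.normal ∧ ¬ e.isIntro := by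
  obtain ⟨n, rfl⟩ : ∃ n, i = n + 1 := ⟨i - 1, by omega⟩
  set D : Fm := .atom (n + 2) with hD
  set X : Fm := xi (n + 1) with hX
  have hxi : xi (n + 2) = (((D.impl X).impl D).impl D).impl X := rfl
  set ξp : Fm := (((D.impl X).impl D).impl D).impl X with hξ
  rw [hxi]
  -- t1 : {D} ⊢ ((D→X)→D)→D
  let t1 : Deriv {D} (((D.impl X).impl D).impl D) :=
    .intro 0 ((Deriv.assume D).dcast (by simp))
  -- t2 : {D, ξp} ⊢ X
  let t2 : Deriv ({D} + {ξp}) X := .elim t1 (.assume ξp)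
  -- t3 : {ξp} ⊢ D → X
  let t3 : Deriv {ξp} (D.impl X) :=
    .intro 1 (t2.dcast (by rw [add_comm]; simp [Multiset.replicate_succ]))
  -- t4 : {ξp, (D→X)→D} ⊢ D
  let t4 : Deriv ({ξp} + {(D.impl X).impl D}) D := .elim t3 (.assume _)
  -- t5 : {ξp} ⊢ ((D→X)→D)→D
  let t5 : Deriv {ξp} (((D.impl X).impl D).impl D) :=
    .intro 1 (t4.dcast (by simp [Multiset.replicate_succ]))
  -- e : {ξp, ξp} ⊢ X
  refine ⟨(Deriv.elim t5 (.assume ξp)).dcast ?_, ?_, ?_⟩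
  · simp [Multiset.replicate_succ]
  · refine (Deriv.dcast_normal _ _).mpr ?_
    simp [t1, t2, t3, t4, t5, Deriv.normal, Deriv.isIntro]
    exact ⟨(Deriv.dcast_normal _ _).mpr ⟨(Deriv.dcast_normal _ _).mpr ⟨(Deriv.dcast_normal _ _).mpr trivial, trivial, fun h => h⟩, trivial, fun h => h⟩, trivial⟩
  · refine mt (Deriv.dcast_isIntro _ _).mp ?_
    exact fun h => h

/-- for i ≥ 1 and m ≥ 1, if there is a normal derivation of the
atom C whose open assumptions are exactly m occurrences of ξ_i, then there is a
normal derivation of C whose open assumptions are exactly 2·m occurrences of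
ξ_{i+1}. -/
theorem double_assumptions (i : ℕ) (hi : 1 ≤ i) (m : ℕ) (hm : 1 ≤ m)
    (h : ∃ d : Deriv (Multiset.replicate m (xi i)) (.atom 0), d.normal) :
    ∃ d' : Deriv (Multiset.replicate (2 * m) (xi (i + 1))) (.atom 0), d'.normal := by
  obtain ⟨e, he, hei⟩ := two_copies i hi
  obtain ⟨d, hd⟩ := h
  obtain ⟨d', hd', -⟩ := subst_lemma e he hei d hd 0 m (by simp)
  have hctx : (0 : Multiset Fm) + m • Multiset.replicate 2 (xi (i + 1)) =
      Multiset.replicate (2 * m) (xi (i + 1)) := by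
    rw [zero_add, Multiset.nsmul_replicate, mul_comm]
  exact ⟨d'.dcast hctx, (Deriv.dcast_normal hctx d').mpr hd'⟩
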